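/- Let T be a finite tree with at least two vertices and let X be an independent set of vertices of T. Then the subgraph of T induced on V(T) \ X has exactly 1 + Σ_{x ∈ X} (deg_T(x) − 1) connected components, where deg_T(x) denotes the degree of x in T. -/

import Mathlib

open SimpleGraph

/-- Any walk in `G` from `w` to `z` gives, in `G` minus the edge `s(x,y)`, either a path
from `w` to `z`, or a path from `w` to one of the endpoints `x`, `y`. -/
private lemma aux_reach {V : Type*} {G : SimpleGraph V} {x y : V} {w z : V}
    (p : G.Walk w z) :
    (G \ SimpleGraph.fromEdgeSet {s(x, y)}).Reachable w z ∨
    (G \ SimpleGraph.fromEdgeSet {s(x, y)}).Reachable w x ∨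
    (G \ SimpleGraph.fromEdgeSet {s(x, y)}).Reachable w y := by
  induction p with
  | nil => exact Or.inl (Reachable.refl _)
  | @cons a b c hab q ih =>
    by_cases he : s(a, b) = s(x, y)
    · rw [Sym2.eq_iff] at he
      rcases he with ⟨rfl, rfl⟩ | ⟨rfl, rfl⟩
      · exact Or.inr (Or.inl (Reachable.refl _))
      · exact Or.inr (Or.inr (Reachable.refl _))
    · have hab' : (G \ SimpleGraph.fromEdgeSet {s(x, y)}).Adj a b := by
        simp only [sdiff_adj, fromEdgeSet_adj, Set.mem_singleton_iff]
        exact ⟨hab, fun h => he h.1⟩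
      rcases ih with h | h | h
      · exact Or.inl (hab'.reachable.trans h)
      · exact Or.inr (Or.inl (hab'.reachable.trans h))
      · exact Or.inr (Or.inr (hab'.reachable.trans h))

/-- Deleting a bridge edge increases the number of connected components by one. -/
private lemma card_cc_delete_bridge {V : Type*} [Finite V] (G : SimpleGraph V) {x y : V}
    (hadj : G.Adj x y)
    (hbr : ¬ (G \ SimpleGraph.fromEdgeSet {s(x, y)}).Reachable x y) :
    Nat.card (G \ SimpleGraph.fromEdgeSet {s(x, y)}).ConnectedComponent
      = Nat.card G.ConnectedComponent + 1 := by
  classical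
  set G' := G \ SimpleGraph.fromEdgeSet {s(x, y)} with hG'
  have hle : G' ≤ G := sdiff_le
  let φ : G'.ConnectedComponent → G.ConnectedComponent :=
    ConnectedComponent.map (Hom.ofLE hle)
  have hφ : ∀ v : V, φ (G'.connectedComponentMk v) = G.connectedComponentMk v := fun v => rfl
  let f : G'.ConnectedComponent → G.ConnectedComponent ⊕ Unit :=
    fun D => if D = G'.connectedComponentMk y then Sum.inr () else Sum.inl (φ D)
  have hxy : G'.connectedComponentMk x ≠ G'.connectedComponentMk y := by
    intro h
    exact hbr (ConnectedComponent.exact h)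
  have hbij : Function.Bijective f := by
    constructor
    · intro D1 D2 hf
      obtain ⟨w1, rfl⟩ : ∃ v, G'.connectedComponentMk v = D1 := D1.exists_rep
      obtain ⟨w2, rfl⟩ : ∃ v, G'.connectedComponentMk v = D2 := D2.exists_rep
      by_cases h1 : G'.connectedComponentMk w1 = G'.connectedComponentMk y <;>
        by_cases h2 : G'.connectedComponentMk w2 = G'.connectedComponentMk y
      · rw [h1, h2]
      · simp only [f, if_pos h1, if_neg h2] at hf
        exact absurd hf (by simp)
      · simp only [f, if_neg h1, if_pos h2] at hf
        exact absurd hf (by simp)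
      · simp only [f, if_neg h1, if_neg h2, Sum.inl.injEq] at hf
        rw [hφ, hφ] at hf
        have hr : G.Reachable w1 w2 := ConnectedComponent.exact hf
        obtain ⟨p⟩ := hr
        rcases aux_reach (x := x) (y := y) p with h | h | h
        · exact ConnectedComponent.sound h
        · rcases aux_reach (x := x) (y := y) p.reverse with g | g | g
          · exact ConnectedComponent.sound g.symm
          · exact (ConnectedComponent.sound h).trans (ConnectedComponent.sound g).symm
          · exact absurd (ConnectedComponent.sound g) h2
        · exact absurd (ConnectedComponent.sound h) h1
    · rintro (C | ⟨⟩)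
      · obtain ⟨w, rfl⟩ : ∃ v, G.connectedComponentMk v = C := C.exists_rep
        by_cases hw : G'.connectedComponentMk w = G'.connectedComponentMk y
        · refine ⟨G'.connectedComponentMk x, ?_⟩
          have hwy : G.connectedComponentMk x = G.connectedComponentMk w := by
            have : G.Reachable w y := (ConnectedComponent.exact hw).mono hle
            exact (ConnectedComponent.sound (hadj.reachable.trans this.symm)).symm ▸ rfl
          simp only [f, if_neg hxy, hφ]
          rw [hwy]
        · exact ⟨G'.connectedComponentMk w, by simp only [f, if_neg hw, hφ]⟩
      · exact ⟨G'.connectedComponentMk y, by simp only [f, if_pos rfl]⟩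
  rw [Nat.card_eq_of_bijective f hbij, Nat.card_sum]
  simp

/-- A finite forest with `n` edges has `|V| - n` connected components. -/
private lemma forest_card {V : Type*} [Fintype V] :
    ∀ (n : ℕ) (G : SimpleGraph V), G.IsAcyclic → G.edgeSet.ncard = n →
      Fintype.card V = n + Nat.card G.ConnectedComponent := by
  intro n
  induction n with
  | zero =>
    intro G hG hn
    have hfin : G.edgeSet.Finite := Set.toFinite _
    have : G.edgeSet = ∅ := (Set.ncard_eq_zero hfin).mp hn
    have hbot : G = ⊥ := by rwa [edgeSet_eq_empty] at this
    subst hbot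
    have : Function.Bijective (⊥ : SimpleGraph V).connectedComponentMk := by
      constructor
      · intro a b h
        exact reachable_bot.mp (ConnectedComponent.exact h)
      · exact fun C => C.exists_rep
    rw [zero_add, ← Nat.card_eq_fintype_card]
    exact Nat.card_eq_of_bijective _ this
  | succ n ih =>
    intro G hG hn
    have hne : G.edgeSet.Nonempty := by
      rw [Set.nonempty_iff_ne_empty]
      intro h
      rw [h, Set.ncard_empty] at hn
      omega
    obtain ⟨e, he⟩ := hne
    induction e using Sym2.ind with
    | _ x y =>
    rw [mem_edgeSet] at he
    set G' := G \ SimpleGraph.fromEdgeSet {s(x, y)} with hG'def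
    have hle : G' ≤ G := sdiff_le
    have hG'acyclic : G'.IsAcyclic := by
      intro v c hc
      refine hG (c.mapLe hle) ?_
      exact (Walk.map_isCycle_iff_of_injective (fun _ _ h => h)).mpr hc
    have hbridge : G.IsBridge s(x, y) := isAcyclic_iff_forall_adj_isBridge.mp hG he
    have hbr : ¬ G'.Reachable x y := isBridge_iff.mp hbridge
    have hedge : G'.edgeSet = G.edgeSet \ {s(x, y)} := by
      rw [hG'def, edgeSet_sdiff, edgeSet_fromEdgeSet]
      rw [Set.diff_diff_right]
      have : G.edgeSet ∩ {e : Sym2 V | e.IsDiag} = ∅ := by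
        ext e
        induction e using Sym2.ind with
        | _ a b =>
          simp only [Set.mem_inter_iff, mem_edgeSet, Set.mem_setOf_eq, Sym2.isDiag_iff_proj_eq,
            Set.mem_empty_iff_false, iff_false, not_and]
          exact fun h => h.ne
      rw [show Sym2.diagSet = {e : Sym2 V | e.IsDiag} from rfl, this, Set.union_empty]
    have hcard' : G'.edgeSet.ncard = n := by
      rw [hedge, Set.ncard_diff_singleton_of_mem (G.mem_edgeSet.mpr he), hn]
      omega
    have := ih G' hG'acyclic hcard'
    have hcc := card_cc_delete_bridge G he hbr
    rw [← hG'def] at hcc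
    omega

/-- Deleting an independent set `X` from a tree `T` with at least two vertices leaves
exactly `1 + ∑_{x ∈ X} (deg_T(x) - 1)` connected components. -/
theorem card_components_tree_delete_independent_set
    {V : Type*} [Fintype V] [DecidableEq V]
    (T : SimpleGraph V) [DecidableRel T.Adj] (hT : T.IsTree)
    (hcard : 2 ≤ Fintype.card V)
    (X : Finset V) (hX : ∀ u ∈ X, ∀ v ∈ X, ¬ T.Adj u v) :
    Nat.card (T.induce {v : V | v ∉ X}).ConnectedComponent
      = 1 + ∑ x ∈ X, (T.degree x - 1) := by
  classical
  set s : Set V := {v : V | v ∉ X} with hs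
  set G : SimpleGraph s := T.induce s with hGdef
  -- the induced graph is acyclic
  have hGacyclic : G.IsAcyclic := by
    intro v c hc
    refine hT.IsAcyclic (c.map (Embedding.induce s).toHom) ?_
    exact (Walk.map_isCycle_iff_of_injective (Subtype.val_injective)).mpr hc
  -- vertex count of the induced graph
  have hcardS : Fintype.card s = Fintype.card V - X.card := by
    have hsf : s.toFinset = Xᶜ := by
      ext v
      simp [hs]
    rw [← Set.toFinset_card, hsf, Finset.card_compl]
  -- edge counting
  set m : ℕ := G.edgeSet.ncard with hm
  have hforest := forest_card m G hGacyclic rfl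
  -- A : edges avoiding X ; B : edges meeting X
  set A : Finset (Sym2 V) := T.edgeFinset.filter (fun e => ∀ v ∈ e, v ∉ X) with hA
  set B : Finset (Sym2 V) := T.edgeFinset.filter (fun e => ¬ ∀ v ∈ e, v ∉ X) with hB
  have hAB : A.card + B.card = T.edgeFinset.card :=
    Finset.card_filter_add_card_filter_not _
  -- m = A.card
  have himg : Sym2.map (Subtype.val : s → V) '' G.edgeSet = ↑A := by
    ext e
    constructor
    · rintro ⟨e', he', rfl⟩
      induction e' using Sym2.ind with
      | _ a b =>
        rw [mem_edgeSet] at he'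
        have hadj : T.Adj a.1 b.1 := he'
        simp only [Sym2.map_pair_eq, hA, Finset.coe_filter, Set.mem_setOf_eq, mem_edgeFinset,
          mem_edgeSet]
        refine ⟨hadj, ?_⟩
        intro v hv
        rw [Sym2.mem_iff] at hv
        rcases hv with rfl | rfl
        · exact a.2
        · exact b.2
    · intro he
      simp only [hA, Finset.coe_filter, Set.mem_setOf_eq, mem_edgeFinset] at he
      obtain ⟨he1, he2⟩ := he
      induction e using Sym2.ind with
      | _ a b =>
        rw [mem_edgeSet] at he1
        have ha : a ∈ s := he2 a (by simp)
        have hb : b ∈ s := he2 b (by simp)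
        refine ⟨s(⟨a, ha⟩, ⟨b, hb⟩), ?_, by simp⟩
        rw [mem_edgeSet]
        exact he1
  have hmA : m = A.card := by
    rw [hm, ← Set.ncard_coe_finset, ← himg,
      Set.ncard_image_of_injective _ (Sym2.map.injective Subtype.val_injective)]
  -- B.card = ∑ degrees
  have hBunion : B = X.biUnion (fun x => T.incidenceFinset x) := by
    ext e
    simp only [hB, Finset.mem_filter, mem_edgeFinset, Finset.mem_biUnion, mem_incidenceFinset,
      incidenceSet, Set.mem_sep_iff]
    constructor
    · rintro ⟨he, hne⟩
      push_neg at hne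
      obtain ⟨v, hv, hvX⟩ := hne
      exact ⟨v, hvX, he, hv⟩
    · rintro ⟨v, hvX, he, hv⟩
      refine ⟨he, ?_⟩
      push_neg
      exact ⟨v, hv, hvX⟩
  have hBcard : B.card = ∑ x ∈ X, T.degree x := by
    rw [hBunion, Finset.card_biUnion]
    · exact Finset.sum_congr rfl fun x _ => T.card_incidenceFinset_eq_degree x
    · intro a ha b hb hab
      rw [Function.onFun, Finset.disjoint_left]
      intro e hea heb
      rw [mem_incidenceFinset] at hea heb
      obtain ⟨he, hae⟩ := hea
      obtain ⟨_, hbe⟩ := heb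
      induction e using Sym2.ind with
      | _ u v =>
        rw [mem_edgeSet] at he
        rw [Sym2.mem_iff] at hae hbe
        rcases hae with rfl | rfl <;> rcases hbe with rfl | rfl
        · exact hab rfl
        · exact hX a ha b hb he
        · exact hX b hb a ha he
        · exact hab rfl
  -- tree edge count
  have hTedges : T.edgeFinset.card + 1 = Fintype.card V := hT.card_edgeFinset
  -- positivity of degrees
  have hdegpos : ∀ x : V, 1 ≤ T.degree x := by
    intro x
    rw [Nat.one_le_iff_ne_zero, ← Nat.pos_iff_ne_zero, T.degree_pos_iff_exists_adj]
    have : Nontrivial V := Fintype.one_lt_card_iff_nontrivial.mp hcard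
    obtain ⟨y, hy⟩ := exists_ne x
    obtain ⟨w⟩ := hT.isConnected.preconnected x y
    cases w with
    | nil => exact absurd rfl (Ne.symm hy)
    | cons h _ => exact ⟨_, h⟩
  have hsum : ∑ x ∈ X, (T.degree x - 1) = (∑ x ∈ X, T.degree x) - X.card := by
    rw [Finset.sum_tsub_distrib _ (fun x _ => hdegpos x), Finset.sum_const, smul_eq_mul, mul_one]
  have hXle : X.card ≤ Fintype.card V := Finset.card_le_univ X
  have hdegsum : X.card ≤ ∑ x ∈ X, T.degree x := by
    calc X.card = ∑ _x ∈ X, 1 := by simp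
    _ ≤ ∑ x ∈ X, T.degree x := Finset.sum_le_sum fun x _ => hdegpos x
  rw [hsum]
  omega
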